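/- Let $(A_m)_{m\in\mathbb{Z}}$ be a uniformly bounded sequence of invertible bounded operators on a Banach space $X$ admitting an exponential dichotomy. Then the linear system $x_{n+1}=A_nx_n$ has the $B$-Lipschitz shadowing property for any admissible Banach sequence space $B$, and moreover for every $\varepsilon>0$ the shadowing trajectory is unique: if $(x_n)$ and $(x_n')$ both solve $x_{n+1}=A_nx_n$ with $\|(x_n-y_n)_n\|_B\le\varepsilon$ and $\|(x_n'-y_n)_n\|_B\le\varepsilon$, then $x_n=x_n'$ for all $n$. -/

import Mathlib

/-- A Banach sequence space over `ℤ`: a linear subspace of real sequences with a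
complete, monotone norm. -/
structure BanachSeqSpace where
  Mem : (ℤ → ℝ) → Prop
  norm : (ℤ → ℝ) → ℝ
  zero_mem : Mem 0
  add_mem : ∀ s t, Mem s → Mem t → Mem (s + t)
  smul_mem : ∀ (c : ℝ) (s), Mem s → Mem (c • s)
  norm_nonneg : ∀ s, Mem s → 0 ≤ norm s
  norm_eq_zero : ∀ s, Mem s → norm s = 0 → s = 0
  norm_add_le : ∀ s t, Mem s → Mem t → norm (s + t) ≤ norm s + norm t
  norm_smul : ∀ (c : ℝ) (s), Mem s → norm (c • s) = |c| * norm s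
  mono_mem : ∀ s t, Mem t → (∀ n, |s n| ≤ |t n|) → Mem s
  mono_norm : ∀ s t, Mem s → Mem t → (∀ n, |s n| ≤ |t n|) → norm s ≤ norm t
  complete : ∀ u : ℕ → (ℤ → ℝ), (∀ k, Mem (u k)) →
    (∀ ε : ℝ, 0 < ε → ∃ N, ∀ j k, N ≤ j → N ≤ k → norm (u j - u k) ≤ ε) →
    ∃ s, Mem s ∧ Filter.Tendsto (fun k => norm (u k - s)) Filter.atTop (nhds 0)

/-- An admissible Banach sequence space: contains the indicators of singletons (with
positive norm) and is invariant under shifts, with equal norms. -/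
structure AdmissibleSeqSpace extends BanachSeqSpace where
  indicator_mem : ∀ n : ℤ, Mem (Set.indicator ({n} : Set ℤ) fun _ => (1 : ℝ))
  indicator_pos : ∀ n : ℤ, 0 < norm (Set.indicator ({n} : Set ℤ) fun _ => (1 : ℝ))
  shift_mem : ∀ (s : ℤ → ℝ) (m : ℤ), Mem s → Mem fun n => s (n + m)
  shift_norm : ∀ (s : ℤ → ℝ) (m : ℤ), Mem s → norm (fun n => s (n + m)) = norm s

/-- Membership in `X_B`. -/
def MemXB {X : Type*} [NormedAddCommGroup X] (B : BanachSeqSpace) (x : ℤ → X) : Prop :=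
  B.Mem fun n => ‖x n‖

/-- The norm on `X_B`. -/
def normXB {X : Type*} [NormedAddCommGroup X] (B : BanachSeqSpace) (x : ℤ → X) : ℝ :=
  B.norm fun n => ‖x n‖

/-- The sequence `A` of bounded operators admits an exponential dichotomy: there exist
an evolution family `E`, projections `P` commuting with the dynamics and constants
`C, lam > 0` with the usual exponential bounds. -/
def ExpDichotomy {X : Type*} [NormedAddCommGroup X] [NormedSpace ℝ X]
    (A : ℤ → X →L[ℝ] X) : Prop :=
  ∃ (E : ℤ → ℤ → X →L[ℝ] X) (P : ℤ → X →L[ℝ] X) (C lam : ℝ),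
    0 < C ∧ 0 < lam ∧
    (∀ n, E n n = ContinuousLinearMap.id ℝ X) ∧
    (∀ m n, E (m + 1) n = (A m).comp (E m n)) ∧
    (∀ m, (P m).comp (P m) = P m) ∧
    (∀ m, (P (m + 1)).comp (A m) = (A m).comp (P m)) ∧
    (∀ m n, n ≤ m → ‖(E m n).comp (P n)‖ ≤ C * Real.exp (-lam * ((m - n : ℤ) : ℝ))) ∧
    (∀ m n, m ≤ n → ‖(E m n).comp (ContinuousLinearMap.id ℝ X - P n)‖ ≤
      C * Real.exp (-lam * ((n - m : ℤ) : ℝ)))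


namespace BanachSeqSpace

variable (𝓑 : BanachSeqSpace)

lemma neg_mem {s} (hs : 𝓑.Mem s) : 𝓑.Mem (-s) := by
  have := 𝓑.smul_mem (-1) s hs
  simpa [neg_one_smul] using this

lemma norm_neg {s} (hs : 𝓑.Mem s) : 𝓑.norm (-s) = 𝓑.norm s := by
  have := 𝓑.norm_smul (-1) s hs
  simpa [neg_one_smul] using this

lemma sub_mem {s t} (hs : 𝓑.Mem s) (ht : 𝓑.Mem t) : 𝓑.Mem (s - t) := by
  have := 𝓑.add_mem s (-t) hs (𝓑.neg_mem ht)
  simpa [sub_eq_add_neg] using this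

lemma sum_mem_and_norm {ι : Type*} (F : Finset ι) (f : ι → (ℤ → ℝ))
    (h : ∀ i ∈ F, 𝓑.Mem (f i)) :
    𝓑.Mem (∑ i ∈ F, f i) ∧ 𝓑.norm (∑ i ∈ F, f i) ≤ ∑ i ∈ F, 𝓑.norm (f i) := by
  classical
  induction F using Finset.induction_on with
  | empty => simpa using ⟨𝓑.zero_mem, le_of_eq (by
      have h0 : 𝓑.norm 0 = 0 := by
        have := 𝓑.norm_smul 0 0 𝓑.zero_mem
        simpa using this
      simpa using h0)⟩
  | @insert a F' hx ih =>
    have hmem : ∀ i ∈ F', 𝓑.Mem (f i) := fun i hi => h i (Finset.mem_insert_of_mem hi)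
    obtain ⟨hm, hn⟩ := ih hmem
    have ha : 𝓑.Mem (f a) := h a (Finset.mem_insert_self a F')
    rw [Finset.sum_insert hx, Finset.sum_insert hx]
    refine ⟨𝓑.add_mem _ _ ha hm, ?_⟩
    exact le_trans (𝓑.norm_add_le _ _ ha hm) (by linarith)

end BanachSeqSpace

namespace AdmissibleSeqSpace

variable (B : AdmissibleSeqSpace)

noncomputable def c0 : ℝ := B.norm (Set.indicator ({0} : Set ℤ) fun _ => (1 : ℝ))

lemma c0_pos : 0 < B.c0 := B.indicator_pos 0

lemma point_bound {s} (hs : B.Mem s) (n : ℤ) : B.c0 * |s n| ≤ B.norm s := by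
  set t : ℤ → ℝ := (s n) • (Set.indicator ({n} : Set ℤ) fun _ => (1 : ℝ)) with ht
  have htmem : B.Mem t := B.smul_mem _ _ (B.indicator_mem n)
  have hle : ∀ k, |t k| ≤ |s k| := by
    intro k
    by_cases hk : k = n
    · subst hk; simp [ht, Set.indicator_of_mem]
    · simp [ht, Set.indicator_of_notMem, hk]
  have h1 : B.norm t ≤ B.norm s := B.mono_norm t s htmem hs hle
  have h2 : B.norm t = |s n| * B.c0 := by
    rw [ht, B.norm_smul _ _ (B.indicator_mem n)]
    congr 1
    have : (Set.indicator ({n} : Set ℤ) fun _ => (1 : ℝ)) =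
        fun k => (Set.indicator ({0} : Set ℤ) fun _ => (1 : ℝ)) (k + (-n)) := by
      funext k
      by_cases hk : k = n
      · subst hk; simp
      · have : k + (-n) ≠ 0 := by omega
        simp [Set.indicator_of_notMem, hk, this]
    rw [this, B.shift_norm _ _ (B.indicator_mem 0)]; rfl
  rw [mul_comm] at h2
  linarith [h2 ▸ h1]

end AdmissibleSeqSpace


section Evolution
variable {X : Type*} [NormedAddCommGroup X] [NormedSpace ℝ X]

lemma traj_unique (A : ℤ → X ≃L[ℝ] X) (u v : ℤ → X)
    (hu : ∀ m, u (m + 1) = A m (u m)) (hv : ∀ m, v (m + 1) = A m (v m))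
    (n : ℤ) (h : u n = v n) : ∀ m, u m = v m := by
  have key : ∀ k : ℤ, u (n + k) = v (n + k) := by
    intro k
    induction k using Int.induction_on with
    | zero => simpa using h
    | succ k ih =>
      have h1 : n + ((k : ℤ) + 1) = (n + k) + 1 := by ring
      rw [h1, hu, hv, ih]
    | pred k ih =>
      set m0 : ℤ := n + (-(k : ℤ) - 1) with hm0
      have h2 : u (m0 + 1) = v (m0 + 1) := by
        rw [show m0 + 1 = n + (-(k:ℤ)) by rw [hm0]; ring]
        exact ih
      rw [hu, hv] at h2
      exact (A m0).injective h2
  intro m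
  have := key (m - n)
  simpa using this

end Evolution

lemma summable_kernel (lam : ℝ) (hlam : 0 < lam) :
    Summable (fun i : ℤ => Real.exp (-lam * |(i : ℝ)|)) := by
  have h0 : (0:ℝ) ≤ Real.exp (-lam) := (Real.exp_pos _).le
  have hr : Real.exp (-lam) < 1 := by
    rw [Real.exp_lt_one_iff]; linarith
  have hnat : Summable (fun n : ℕ => Real.exp (-lam) ^ n) :=
    summable_geometric_of_lt_one h0 hr
  apply Summable.of_nat_of_neg
  · refine hnat.congr fun n => ?_
    rw [← Real.exp_nat_mul]
    congr 1
    push_cast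
    rw [abs_of_nonneg (by positivity)]
    ring
  · refine hnat.congr fun n => ?_
    rw [← Real.exp_nat_mul]
    congr 1
    push_cast
    rw [abs_neg, abs_of_nonneg (by positivity)]
    ring

lemma tendsto_exp_decay (lam K : ℝ) (hlam : 0 < lam) :
    Filter.Tendsto (fun t : ℕ => K * Real.exp (-lam * t)) Filter.atTop (nhds 0) := by
  have h0 : (0:ℝ) ≤ Real.exp (-lam) := (Real.exp_pos _).le
  have hr : Real.exp (-lam) < 1 := by rw [Real.exp_lt_one_iff]; linarith
  have h1 : Filter.Tendsto (fun t : ℕ => Real.exp (-lam) ^ t) Filter.atTop (nhds 0) :=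
    tendsto_pow_atTop_nhds_zero_of_lt_one h0 hr
  have h2 := h1.const_mul K
  rw [mul_zero] at h2
  refine h2.congr fun t => ?_
  rw [← Real.exp_nat_mul]
  congr 2
  ring

/-- `B`-Lipschitz shadowing for linear systems with an exponential dichotomy, together with
uniqueness of the shadowing trajectory for every `ε > 0`. -/
theorem linear_B_lipschitz_shadowing {X : Type*} [NormedAddCommGroup X]
    [NormedSpace ℝ X] [CompleteSpace X]
    (B : AdmissibleSeqSpace)
    (A : ℤ → X ≃L[ℝ] X) (M : ℝ) (hM : ∀ m, ‖(A m : X →L[ℝ] X)‖ ≤ M)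
    (hED : ExpDichotomy fun m => (A m : X →L[ℝ] X)) :
    (∃ L > (0 : ℝ), ∀ ε > (0 : ℝ), ∀ y : ℤ → X,
      MemXB B.toBanachSeqSpace (fun n => y (n + 1) - A n (y n)) →
      normXB B.toBanachSeqSpace (fun n => y (n + 1) - A n (y n)) ≤ L * ε →
      ∃ x : ℤ → X, (∀ n, x (n + 1) = A n (x n)) ∧
        MemXB B.toBanachSeqSpace (x - y) ∧ normXB B.toBanachSeqSpace (x - y) ≤ ε) ∧
    (∀ ε > (0 : ℝ), ∀ y x x' : ℤ → X,
      (∀ n, x (n + 1) = A n (x n)) → (∀ n, x' (n + 1) = A n (x' n)) →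
      MemXB B.toBanachSeqSpace (x - y) → normXB B.toBanachSeqSpace (x - y) ≤ ε →
      MemXB B.toBanachSeqSpace (x' - y) → normXB B.toBanachSeqSpace (x' - y) ≤ ε →
      x = x') := by
  classical
  obtain ⟨E, P, C, lam, hC, hlam, hE0, hErec, hPproj, hPcomm, hb1, hb2⟩ := hED
  set 𝓑 := B.toBanachSeqSpace with h𝓑
  have hc0 := B.c0_pos
  -- trajectories are propagated by E
  have hEz : ∀ z : ℤ → X, (∀ m, z (m + 1) = A m (z m)) → ∀ n m, z m = E m n (z n) := by
    intro z hz n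
    have h := traj_unique A z (fun m => E m n (z n)) hz (fun m => by
      show E (m + 1) n (z n) = A m (E m n (z n))
      rw [hErec m n]; rfl) n (by show z n = E n n (z n); rw [hE0]; rfl)
    exact fun m => h m
  have hPE : ∀ n (v : X) (m), P m (E m n v) = E m n (P n v) := by
    intro n v
    have h := traj_unique A (fun m => P m (E m n v)) (fun m => E m n (P n v))
      (fun m => ?_) (fun m => ?_) n ?_
    · exact fun m => h m
    · show P (m + 1) (E (m + 1) n v) = A m (P m (E m n v))
      rw [hErec m n]
      have h2 := hPcomm m
      calc P (m + 1) (((A m : X →L[ℝ] X)).comp (E m n) v)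
          = ((P (m + 1)).comp ((A m : X →L[ℝ] X))) (E m n v) := rfl
        _ = (((A m : X →L[ℝ] X)).comp (P m)) (E m n v) := by rw [h2]
        _ = A m (P m (E m n v)) := rfl
    · show E (m + 1) n (P n v) = A m (E m n (P n v))
      rw [hErec m n]; rfl
    · show P n (E n n v) = E n n (P n v)
      rw [hE0]; rfl
  have hbP : ∀ m n (v : X), n ≤ m →
      ‖E m n (P n v)‖ ≤ C * Real.exp (-lam * ((m - n : ℤ) : ℝ)) * ‖v‖ := by
    intro m n v h
    calc ‖E m n (P n v)‖ = ‖((E m n).comp (P n)) v‖ := rfl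
      _ ≤ ‖(E m n).comp (P n)‖ * ‖v‖ := ContinuousLinearMap.le_opNorm _ _
      _ ≤ C * Real.exp (-lam * ((m - n : ℤ) : ℝ)) * ‖v‖ :=
          mul_le_mul_of_nonneg_right (hb1 m n h) (norm_nonneg v)
  have hbQ : ∀ m n (v : X), m ≤ n →
      ‖E m n (v - P n v)‖ ≤ C * Real.exp (-lam * ((n - m : ℤ) : ℝ)) * ‖v‖ := by
    intro m n v h
    have hv : (E m n) (v - P n v) = ((E m n).comp (ContinuousLinearMap.id ℝ X - P n)) v := by
      simp [ContinuousLinearMap.comp_apply, ContinuousLinearMap.sub_apply]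
    calc ‖E m n (v - P n v)‖ = ‖((E m n).comp (ContinuousLinearMap.id ℝ X - P n)) v‖ := by rw [hv]
      _ ≤ ‖(E m n).comp (ContinuousLinearMap.id ℝ X - P n)‖ * ‖v‖ := ContinuousLinearMap.le_opNorm _ _
      _ ≤ C * Real.exp (-lam * ((n - m : ℤ) : ℝ)) * ‖v‖ :=
          mul_le_mul_of_nonneg_right (hb2 m n h) (norm_nonneg v)
  -- pointwise bound from membership
  have hpt : ∀ (w : ℤ → X), MemXB 𝓑 w → ∀ ε : ℝ, normXB 𝓑 w ≤ ε → ∀ n, ‖w n‖ ≤ ε / B.c0 := by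
    intro w hw ε hwε n
    have := B.point_bound hw n
    rw [abs_of_nonneg (norm_nonneg _)] at this
    rw [le_div_iff₀ hc0, mul_comm]
    calc B.c0 * ‖w n‖ ≤ normXB 𝓑 w := this
      _ ≤ ε := hwε
  constructor
  · -- existence
    set κ : ℤ → ℝ := fun i => Real.exp (-lam * |(i : ℝ)|) with hκ
    have hκsum : Summable κ := summable_kernel lam hlam
    have hκpos : ∀ i, 0 < κ i := fun i => Real.exp_pos _
    set C' : ℝ := C * Real.exp lam with hC'
    have hC'pos : 0 < C' := by positivity
    have hκsum' : Summable (fun i : ℤ => C' * κ i) := hκsum.mul_left C'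
    set T : ℝ := ∑' i : ℤ, C' * κ i with hT
    have hTpos : 0 < T := by
      have h0 : C' * κ 0 ≤ T :=
        Summable.le_tsum hκsum' 0 (fun j _ => le_of_lt (by positivity))
      have h1 : 0 < C' * κ 0 := by positivity
      linarith
    refine ⟨1 / T, by positivity, ?_⟩
    intro ε hε y hdm hdn
    set d : ℤ → X := fun n => y (n + 1) - A n (y n) with hd
    set R : ℝ := normXB 𝓑 d with hRset
    have hRdef : R = 𝓑.norm (fun n => ‖d n‖) := rfl
    have hddmem : 𝓑.Mem (fun n => ‖d n‖) := hdm
    have hRε : R ≤ 1 / T * ε := hdn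
    have hR0 : 0 ≤ R := hRdef ▸ 𝓑.norm_nonneg (fun n => ‖d n‖) hddmem
    set D : ℝ := R / B.c0 with hD
    have hD0 : 0 ≤ D := by positivity
    have hDD : ∀ j, ‖d j‖ ≤ D := hpt d hdm R (le_of_eq hRset.symm)
    -- the Green-function terms
    set g : ℤ → ℤ → X := fun n j =>
      if j + 1 ≤ n then E n (j + 1) (P (j + 1) (d j))
      else - E n (j + 1) (d j - P (j + 1) (d j)) with hg
    have hgbd : ∀ n j, ‖g n j‖ ≤ C' * κ (n - j) * ‖d j‖ := by
      intro n j
      have hκval : κ (n - j) = Real.exp (-lam * |((n - j : ℤ) : ℝ)|) := rfl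
      by_cases h : j + 1 ≤ n
      · rw [hg]
        simp only [if_pos h]
        refine le_trans (hbP n (j + 1) (d j) h) ?_
        have heq : C * Real.exp (-lam * ((n - (j + 1) : ℤ) : ℝ)) = C' * κ (n - j) := by
          rw [hκval, hC']
          have habs : |((n - j : ℤ) : ℝ)| = ((n - j : ℤ) : ℝ) := by
            rw [abs_of_nonneg]
            exact_mod_cast (by omega : (0:ℤ) ≤ n - j)
          rw [habs]
          rw [show -lam * ((n - (j + 1) : ℤ) : ℝ) = lam + -lam * ((n - j : ℤ) : ℝ) by
            push_cast; ring]
          rw [Real.exp_add]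
          ring
        rw [heq]
      · rw [hg]
        simp only [if_neg h]
        rw [norm_neg]
        refine le_trans (hbQ n (j + 1) (d j) (by omega)) ?_
        refine mul_le_mul_of_nonneg_right ?_ (norm_nonneg _)
        have habs : |((n - j : ℤ) : ℝ)| = ((j - n : ℤ) : ℝ) := by
          rw [show ((n - j : ℤ) : ℝ) = -((j - n : ℤ) : ℝ) by push_cast; ring, abs_neg,
            abs_of_nonneg]
          exact_mod_cast (by omega : (0:ℤ) ≤ j - n)
        rw [hκval, habs, hC']
        rw [show -lam * (((j + 1) - n : ℤ) : ℝ) = -lam + -lam * ((j - n : ℤ) : ℝ) by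
          push_cast; ring]
        rw [Real.exp_add]
        have he : Real.exp (-lam) ≤ Real.exp lam := Real.exp_le_exp.mpr (by linarith)
        have hq : (0:ℝ) < Real.exp (-lam * ((j - n : ℤ) : ℝ)) := Real.exp_pos _
        calc C * (Real.exp (-lam) * Real.exp (-lam * ((j - n : ℤ) : ℝ)))
            ≤ C * (Real.exp lam * Real.exp (-lam * ((j - n : ℤ) : ℝ))) := by
              refine mul_le_mul_of_nonneg_left
                (mul_le_mul_of_nonneg_right he hq.le) hC.le
          _ = C * Real.exp lam * Real.exp (-lam * ((j - n : ℤ) : ℝ)) := by ring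
    have hgbd' : ∀ n j, ‖g n j‖ ≤ C' * κ (n - j) * D := by
      intro n j
      refine le_trans (hgbd n j) (mul_le_mul_of_nonneg_left (hDD j) (by positivity))
    have hκn : ∀ n : ℤ, Summable (fun j : ℤ => C' * κ (n - j) * D) := by
      intro n
      have hF : Summable (fun i : ℤ => C' * κ i * D) := hκsum'.mul_right D
      have := ((Equiv.subLeft n).summable_iff
        (f := fun i : ℤ => C' * κ i * D)).mpr hF
      exact this.congr (fun j => rfl)
    have hgsum : ∀ n, Summable (fun j => g n j) :=
      fun n => Summable.of_norm_bounded (hκn n) (hgbd' n)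
    have hgnormsum : ∀ n, Summable (fun j => ‖g n j‖) :=
      fun n => Summable.of_nonneg_of_le (fun _ => norm_nonneg _) (hgbd' n) (hκn n)
    set w : ℤ → X := fun n => ∑' j, g n j with hw
    -- the recursion for w
    have hstep : ∀ n k (u : X), A n (E n k u) = E (n + 1) k u := by
      intro n k u
      rw [hErec n k]; rfl
    have hrec : ∀ n, w (n + 1) = A n (w n) + d n := by
      intro n
      have hmapsum : Summable (fun j => A n (g n j)) := by
        have := (hgsum n).map ((A n : X →L[ℝ] X)) (A n : X →L[ℝ] X).continuous
        exact this.congr (fun j => rfl)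
      have hmap : A n (w n) = ∑' j, A n (g n j) := by
        rw [hw]
        exact ContinuousLinearMap.map_tsum (A n : X →L[ℝ] X) (hgsum n)
      have hdiff : ∀ j, g (n + 1) j - A n (g n j) = if j = n then d n else 0 := by
        intro j
        by_cases hj : j = n
        · subst hj
          simp only [hg]
          rw [if_neg (by omega : ¬ (j + 1 ≤ j)), if_pos (le_refl (j + 1))]
          rw [map_neg, hstep j (j + 1), hE0]
          simp only [ContinuousLinearMap.id_apply, if_pos rfl]
          abel
        · by_cases h2 : j + 1 ≤ n
          · simp only [hg]
            rw [if_pos h2, if_pos (by omega : j + 1 ≤ n + 1), hstep n (j + 1),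
              if_neg hj, sub_self]
          · simp only [hg]
            rw [if_neg h2, if_neg (by omega : ¬ (j + 1 ≤ n + 1)), map_neg,
              hstep n (j + 1), if_neg hj, sub_self]
      have hsub : w (n + 1) - A n (w n) = d n := by
        rw [hmap, hw]
        rw [← Summable.tsum_sub (hgsum (n + 1)) hmapsum]
        rw [tsum_congr hdiff]
        exact tsum_ite_eq n (fun _ => d n)
      have := hsub
      rw [sub_eq_iff_eq_add] at this
      rw [this]; abel
    -- the majorant sequences
    set t : ℤ → ℤ → ℝ := fun i n => C' * κ i * ‖d (n - i)‖ with htdef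
    have htshift : ∀ i, t i = (C' * κ i) • (fun n => ‖d (n + (-i))‖) := by
      intro i
      funext n
      simp only [htdef, Pi.smul_apply, smul_eq_mul, sub_eq_add_neg]
    have htmem : ∀ i, 𝓑.Mem (t i) := by
      intro i
      rw [htshift i]
      exact 𝓑.smul_mem _ _ (B.shift_mem _ (-i) hddmem)
    have htnorm : ∀ i, 𝓑.norm (t i) = C' * κ i * R := by
      intro i
      rw [htshift i, 𝓑.norm_smul _ _ (B.shift_mem _ (-i) hddmem),
        B.shift_norm _ (-i) hddmem, abs_of_nonneg (by positivity), hRdef]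
    -- partial sums and completeness
    set F : ℕ → Finset ℤ := fun N => Finset.Icc (-(N : ℤ)) N with hF
    have hFmono : Monotone F := by
      intro a b hab
      apply Finset.Icc_subset_Icc <;> omega
    have hFex : ∀ i : ℤ, ∃ N : ℕ, i ∈ F N := by
      intro i
      refine ⟨i.natAbs, ?_⟩
      simp only [hF, Finset.mem_Icc]
      omega
    have hFtend : Filter.Tendsto F Filter.atTop Filter.atTop :=
      hFmono.tendsto_atTop_finset hFex
    have hκpart : Filter.Tendsto (fun N => ∑ i ∈ F N, C' * κ i) Filter.atTop (nhds T) :=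
      hκsum'.hasSum.comp hFtend
    have hκpartle : ∀ N, ∑ i ∈ F N, C' * κ i ≤ T :=
      fun N => Summable.sum_le_tsum (F N) (fun i _ => le_of_lt (by positivity)) hκsum'
    set u : ℕ → (ℤ → ℝ) := fun N => ∑ i ∈ F N, t i with hu
    have humem : ∀ N, 𝓑.Mem (u N) :=
      fun N => (𝓑.sum_mem_and_norm (F N) t (fun i _ => htmem i)).1
    have hunorm : ∀ N, 𝓑.norm (u N) ≤ (∑ i ∈ F N, C' * κ i) * R := by
      intro N
      refine le_trans (𝓑.sum_mem_and_norm (F N) t (fun i _ => htmem i)).2 ?_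
      rw [Finset.sum_mul]
      exact le_of_eq (Finset.sum_congr rfl (fun i _ => htnorm i))
    have husub : ∀ j k : ℕ, j ≤ k → 𝓑.norm (u k - u j) ≤ (T - ∑ i ∈ F j, C' * κ i) * R := by
      intro j k hjk
      have hsub : F j ⊆ F k := hFmono hjk
      have heq : u k - u j = ∑ i ∈ F k \ F j, t i := by
        rw [hu]
        rw [Finset.sum_sdiff_eq_sub hsub]
      rw [heq]
      refine le_trans (𝓑.sum_mem_and_norm (F k \ F j) t (fun i _ => htmem i)).2 ?_
      have h1 : ∑ i ∈ F k \ F j, 𝓑.norm (t i) = (∑ i ∈ F k \ F j, C' * κ i) * R := by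
        rw [Finset.sum_mul]
        exact Finset.sum_congr rfl (fun i _ => htnorm i)
      rw [h1]
      refine mul_le_mul_of_nonneg_right ?_ hR0
      rw [Finset.sum_sdiff_eq_sub hsub]
      have := hκpartle k
      linarith
    have hucauchy : ∀ δ : ℝ, 0 < δ →
        ∃ N, ∀ j k, N ≤ j → N ≤ k → 𝓑.norm (u j - u k) ≤ δ := by
      intro δ hδ
      have hδ' : 0 < δ / (R + 1) := by positivity
      have hev : ∀ᶠ N in Filter.atTop, T - ∑ i ∈ F N, C' * κ i < δ / (R + 1) := by
        have := hκpart.eventually (eventually_gt_nhds (by linarith : T - δ / (R + 1) < T))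
        filter_upwards [this] with N hN
        linarith
      obtain ⟨N₀, hN₀⟩ := hev.exists_forall_of_atTop
      refine ⟨N₀, fun j k hj hk => ?_⟩
      have key : ∀ a b : ℕ, N₀ ≤ a → a ≤ b → 𝓑.norm (u b - u a) ≤ δ := by
        intro a b ha hab
        refine le_trans (husub a b hab) ?_
        have h2 := hN₀ a ha
        have h3 : (T - ∑ i ∈ F a, C' * κ i) * R ≤ δ / (R + 1) * R := by
          refine mul_le_mul_of_nonneg_right (le_of_lt h2) hR0
        refine le_trans h3 ?_
        rw [div_mul_eq_mul_div, div_le_iff₀ (by linarith)]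
        nlinarith
      rcases le_total j k with h | h
      · have := key j k hj h
        have hneg : u j - u k = -(u k - u j) := by abel
        rw [hneg, 𝓑.norm_neg (𝓑.sub_mem (humem k) (humem j))]
        exact this
      · exact key k j hk h
    obtain ⟨s, hsmem, hslim⟩ := 𝓑.complete u humem hucauchy
    -- pointwise identification of s
    have hts : ∀ n, Summable (fun i => t i n) := by
      intro n
      refine Summable.of_nonneg_of_le (fun i => by positivity) (fun i => ?_)
        (hκsum'.mul_right D)
      exact mul_le_mul_of_nonneg_left (hDD (n - i)) (by positivity)
    have hupt : ∀ n, Filter.Tendsto (fun N => u N n) Filter.atTop (nhds (∑' i, t i n)) := by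
      intro n
      have h1 : Filter.Tendsto (fun N => ∑ i ∈ F N, t i n) Filter.atTop (nhds (∑' i, t i n)) :=
        (hts n).hasSum.comp hFtend
      refine h1.congr (fun N => ?_)
      show ∑ i ∈ F N, t i n = (∑ i ∈ F N, t i) n
      exact (Finset.sum_apply n (F N) t).symm
    have hspt : ∀ n, s n = ∑' i, t i n := by
      intro n
      have h1 : Filter.Tendsto (fun N => u N n - s n) Filter.atTop (nhds 0) := by
        apply squeeze_zero_norm (a := fun N => (1 / B.c0) * 𝓑.norm (u N - s))
        · intro N
          have h2 := B.point_bound (𝓑.sub_mem (humem N) hsmem) n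
          rw [Pi.sub_apply] at h2
          rw [Real.norm_eq_abs, one_div, inv_mul_eq_div, le_div_iff₀ hc0, mul_comm]
          exact h2
        · have := hslim.const_mul (1 / B.c0)
          rw [mul_zero] at this
          exact this
      have h3 : Filter.Tendsto (fun N => u N n) Filter.atTop (nhds (s n)) := by
        have := h1.add (tendsto_const_nhds (x := s n))
        rw [zero_add] at this
        refine this.congr (fun N => by ring)
      exact tendsto_nhds_unique h3 (hupt n)
    have hσ0 : ∀ n, 0 ≤ ∑' i, t i n :=
      fun n => tsum_nonneg (fun i => by positivity)
    -- the bound ‖w n‖ ≤ s n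
    have hwle : ∀ n, ‖w n‖ ≤ ∑' i, t i n := by
      intro n
      have hbsum : Summable (fun j => C' * κ (n - j) * ‖d j‖) := by
        refine Summable.of_nonneg_of_le (fun j => by positivity) (fun j => ?_) (hκn n)
        exact mul_le_mul_of_nonneg_left (hDD j) (by positivity)
      calc ‖w n‖ ≤ ∑' j, ‖g n j‖ := norm_tsum_le_tsum_norm (hgnormsum n)
        _ ≤ ∑' j, C' * κ (n - j) * ‖d j‖ := Summable.tsum_le_tsum (hgbd n) (hgnormsum n) hbsum
        _ = ∑' i, t i n := by
            rw [← Equiv.tsum_eq (Equiv.subLeft n) (fun j => C' * κ (n - j) * ‖d j‖)]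
            refine tsum_congr (fun i => ?_)
            simp only [htdef, Equiv.subLeft_apply, sub_sub_cancel]
    have hwabs : ∀ n, |‖w n‖| ≤ |s n| := by
      intro n
      rw [abs_of_nonneg (norm_nonneg _), abs_of_nonneg (by rw [hspt n]; exact hσ0 n)]
      rw [hspt n]
      exact hwle n
    have hwmem : 𝓑.Mem (fun n => ‖w n‖) := 𝓑.mono_mem _ s hsmem hwabs
    have hwnorm1 : 𝓑.norm (fun n => ‖w n‖) ≤ 𝓑.norm s :=
      𝓑.mono_norm _ s hwmem hsmem hwabs
    have hsnorm : 𝓑.norm s ≤ T * R := by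
      have hlim2 : Filter.Tendsto
          (fun N => (∑ i ∈ F N, C' * κ i) * R + 𝓑.norm (u N - s))
          Filter.atTop (nhds (T * R + 0)) :=
        (hκpart.mul_const R).add hslim
      rw [add_zero] at hlim2
      refine ge_of_tendsto' hlim2 (fun N => ?_)
      have h1 : s = u N + (s - u N) := by abel
      have h2 : 𝓑.norm s ≤ 𝓑.norm (u N) + 𝓑.norm (s - u N) := by
        nth_rewrite 1 [h1]
        exact 𝓑.norm_add_le _ _ (humem N) (𝓑.sub_mem hsmem (humem N))
      have h3 : 𝓑.norm (s - u N) = 𝓑.norm (u N - s) := by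
        rw [show s - u N = -(u N - s) by abel, 𝓑.norm_neg (𝓑.sub_mem (humem N) hsmem)]
      rw [h3] at h2
      exact le_trans h2 (by linarith [hunorm N])
    have hwnorm : 𝓑.norm (fun n => ‖w n‖) ≤ ε := by
      refine le_trans hwnorm1 (le_trans hsnorm ?_)
      have : T * R ≤ T * (1 / T * ε) :=
        mul_le_mul_of_nonneg_left hRε hTpos.le
      refine le_trans this ?_
      rw [← mul_assoc, mul_one_div, div_self (ne_of_gt hTpos), one_mul]
    -- the shadowing trajectory
    refine ⟨y - w, ?_, ?_, ?_⟩
    · intro n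
      have hyd : y (n + 1) = A n (y n) + d n := by
        show y (n + 1) = A n (y n) + (y (n + 1) - A n (y n))
        abel
      calc (y - w) (n + 1) = y (n + 1) - w (n + 1) := rfl
        _ = (A n (y n) + d n) - (A n (w n) + d n) := by rw [← hyd, ← hrec n]
        _ = A n (y n) - A n (w n) := by abel
        _ = A n (y n - w n) := by rw [map_sub]
        _ = A n ((y - w) n) := rfl
    · show 𝓑.Mem (fun n => ‖((y - w) - y) n‖)
      have hxy : (fun n => ‖((y - w) - y) n‖) = fun n => ‖w n‖ := by
        funext n
        show ‖y n - w n - y n‖ = ‖w n‖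
        rw [show y n - w n - y n = -(w n) by abel, norm_neg]
      rw [hxy]
      exact hwmem
    · show 𝓑.norm (fun n => ‖((y - w) - y) n‖) ≤ ε
      have hxy : (fun n => ‖((y - w) - y) n‖) = fun n => ‖w n‖ := by
        funext n
        show ‖y n - w n - y n‖ = ‖w n‖
        rw [show y n - w n - y n = -(w n) by abel, norm_neg]
      rw [hxy]
      exact hwnorm

  · -- uniqueness
    intro ε hε y x x' hx hx' hm1 hn1 hm2 hn2
    set z : ℤ → X := fun n => x n - x' n with hzdef
    have hz : ∀ m, z (m + 1) = A m (z m) := by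
      intro m
      simp only [hzdef, hx m, hx' m]
      rw [← map_sub]
    have K : ℝ := 0
    have hzb : ∀ n, ‖z n‖ ≤ ε / B.c0 + ε / B.c0 := by
      intro n
      have b1 := hpt (x - y) hm1 ε hn1 n
      have b2 := hpt (x' - y) hm2 ε hn2 n
      calc ‖z n‖ = ‖(x - y) n - (x' - y) n‖ := by
            show ‖x n - x' n‖ = ‖(x n - y n) - (x' n - y n)‖
            congr 1
            abel
        _ ≤ ‖(x - y) n‖ + ‖(x' - y) n‖ := norm_sub_le _ _
        _ ≤ ε / B.c0 + ε / B.c0 := add_le_add b1 b2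
    have hzE := hEz z hz
    have hz0 : ∀ n, z n = 0 := by
      intro n
      have hPz : ‖P n (z n)‖ ≤ 0 := by
        refine ge_of_tendsto' (tendsto_exp_decay lam (C * (ε / B.c0 + ε / B.c0)) hlam)
          (fun t => ?_)
        set m : ℤ := n - (t : ℤ) with hm
        have hmn : m ≤ n := by omega
        have h1 : P n (z n) = E n m (P m (z m)) := by
          rw [← hPE m (z m) n, ← hzE m n]
        rw [h1]
        have h2 := hbP n m (z m) hmn
        have h3 : ((n - m : ℤ) : ℝ) = (t : ℝ) := by rw [hm]; push_cast; ring
        rw [h3] at h2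
        calc ‖E n m (P m (z m))‖ ≤ C * Real.exp (-lam * t) * ‖z m‖ := h2
          _ ≤ C * Real.exp (-lam * t) * (ε / B.c0 + ε / B.c0) := by
              refine mul_le_mul_of_nonneg_left (hzb m) (by positivity)
          _ = C * (ε / B.c0 + ε / B.c0) * Real.exp (-lam * t) := by ring
      have hQz : ‖z n - P n (z n)‖ ≤ 0 := by
        refine ge_of_tendsto' (tendsto_exp_decay lam (C * (ε / B.c0 + ε / B.c0)) hlam)
          (fun t => ?_)
        set m : ℤ := n + (t : ℤ) with hm
        have hmn : n ≤ m := by omega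
        have h1 : z n - P n (z n) = E n m (z m - P m (z m)) := by
          conv_rhs => rw [map_sub]
          rw [← hPE m (z m) n, ← hzE m n]
        rw [h1]
        have h2 := hbQ n m (z m) hmn
        have h3 : ((m - n : ℤ) : ℝ) = (t : ℝ) := by rw [hm]; push_cast; ring
        rw [h3] at h2
        calc ‖E n m (z m - P m (z m))‖ ≤ C * Real.exp (-lam * t) * ‖z m‖ := h2
          _ ≤ C * Real.exp (-lam * t) * (ε / B.c0 + ε / B.c0) := by
              refine mul_le_mul_of_nonneg_left (hzb m) (by positivity)
          _ = C * (ε / B.c0 + ε / B.c0) * Real.exp (-lam * t) := by ring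
      have e1 : P n (z n) = 0 := by
        have := le_antisymm hPz (norm_nonneg _)
        exact norm_eq_zero.mp this
      have e2 : z n - P n (z n) = 0 := by
        have := le_antisymm hQz (norm_nonneg _)
        exact norm_eq_zero.mp this
      rw [e1, sub_zero] at e2
      exact e2
    funext n
    exact sub_eq_zero.mp (hz0 n)
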